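/- Let X be a real Banach lattice and T : X → X a positive bounded linear operator (0 ≤ x implies 0 ≤ T x). Let ρ > 0 and suppose that ρ^n ≤ ‖T^n‖ for every n ∈ ℕ and that ‖T^n‖^{1/n} → ρ as n → ∞. Then ρ is an approximate eigenvalue of T: there exists a sequence (x_j) in X with ‖x_j‖ = 1 and ‖T x_j − ρ·x_j‖ → 0. -/

import Mathlib

set_option linter.unusedSectionVars false
set_option synthInstance.maxHeartbeats 1000000
set_option maxHeartbeats 1000000
set_option linter.unusedVariables false


open Filter

section Aux

variable {X : Type*} [NormedAddCommGroup X] [Lattice X] [HasSolidNorm X]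
    [IsOrderedAddMonoid X] [NormedSpace ℝ X]
    [PosSMulStrictMono ℝ X] [PosSMulReflectLT ℝ X] [CompleteSpace X]

private def IsPos (S : X →L[ℝ] X) : Prop := ∀ x : X, 0 ≤ x → 0 ≤ S x

private lemma IsPos.mono {S : X →L[ℝ] X} (hS : IsPos S) {a b : X} (h : a ≤ b) : S a ≤ S b := by
  have := hS (b - a) (by simpa using h)
  rw [map_sub, sub_nonneg] at this
  exact this

private lemma IsPos.mul {S R : X →L[ℝ] X} (hS : IsPos S) (hR : IsPos R) : IsPos (S * R) :=
  fun x hx => hS _ (hR _ hx)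

private lemma IsPos.pow {S : X →L[ℝ] X} (hS : IsPos S) (n : ℕ) : IsPos (S ^ n) := by
  induction n with
  | zero => intro x hx; simpa using hx
  | succ n ih => rw [pow_succ]; exact ih.mul hS

private lemma IsPos.smul {S : X →L[ℝ] X} (hS : IsPos S) {c : ℝ} (hc : 0 ≤ c) :
    IsPos (c • S) := fun x hx => by
  have := hS x hx
  simpa using smul_nonneg hc this

private lemma tsum_apply'' {f : ℕ → X →L[ℝ] X} (hf : Summable f) (x : X) :
    (∑' n, f n) x = ∑' n, f n x := by
  have := (ContinuousLinearMap.apply ℝ X x).map_tsum hf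
  simpa using this

private lemma IsPos.tsum {f : ℕ → X →L[ℝ] X} (hf : Summable f) (h : ∀ n, IsPos (f n)) :
    IsPos (∑' n, f n) := by
  intro x hx
  rw [tsum_apply'' hf x]
  exact tsum_nonneg fun n => h n x hx

private lemma norm_apply_le_abs {S : X →L[ℝ] X} (hS : IsPos S) (x : X) :
    ‖S x‖ ≤ ‖S |x|‖ := by
  apply norm_le_norm_of_abs_le_abs
  rw [abs_of_nonneg (hS _ (abs_nonneg x))]
  refine sup_le (hS.mono (le_abs_self x)) ?_
  rw [← map_neg]
  exact hS.mono (neg_le_abs x)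

/-- norm bound via positive vectors -/
private lemma opNorm_le_of_pos {S : X →L[ℝ] X} (hS : IsPos S) {C : ℝ} (hC : 0 ≤ C)
    (h : ∀ x : X, 0 ≤ x → ‖S x‖ ≤ C * ‖x‖) : ‖S‖ ≤ C := by
  refine S.opNorm_le_bound hC fun x => ?_
  calc ‖S x‖ ≤ ‖S |x|‖ := norm_apply_le_abs hS x
    _ ≤ C * ‖|x|‖ := h _ (abs_nonneg x)
    _ = C * ‖x‖ := by rw [norm_abs_eq_norm]

/-- geometric series in the operator algebra -/
private lemma geom_left {u : X →L[ℝ] X} (h : Summable fun n => u ^ n) (h0 : Tendsto (fun n => u ^ n) atTop (nhds 0)) :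
    (1 - u) * (∑' n, u ^ n) = 1 := by
  have hps := h.hasSum.tendsto_sum_nat
  have h1 : Tendsto (fun n => (1 - u) * ∑ i ∈ Finset.range n, u ^ i) atTop
      (nhds ((1 - u) * ∑' n, u ^ n)) := hps.const_mul _
  have h2 : Tendsto (fun n : ℕ => 1 - u ^ n) atTop (nhds ((1:X →L[ℝ] X) - 0)) :=
    tendsto_const_nhds.sub h0
  simp only [mul_neg_geom_sum] at h1
  rw [sub_zero] at h2
  exact tendsto_nhds_unique h1 h2

private lemma geom_right {u : X →L[ℝ] X} (h : Summable fun n => u ^ n) (h0 : Tendsto (fun n => u ^ n) atTop (nhds 0)) :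
    (∑' n, u ^ n) * (1 - u) = 1 := by
  have hps := h.hasSum.tendsto_sum_nat
  have h1 : Tendsto (fun n => (∑ i ∈ Finset.range n, u ^ i) * (1 - u)) atTop
      (nhds ((∑' n, u ^ n) * (1 - u))) := hps.mul_const _
  have h2 : Tendsto (fun n : ℕ => 1 - u ^ n) atTop (nhds ((1:X →L[ℝ] X) - 0)) :=
    tendsto_const_nhds.sub h0
  simp only [geom_sum_mul_neg] at h1
  rw [sub_zero] at h2
  exact tendsto_nhds_unique h1 h2

end Aux

section Main

variable {X : Type*} [NormedAddCommGroup X] [Lattice X] [HasSolidNorm X]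
    [IsOrderedAddMonoid X] [NormedSpace ℝ X]
    [PosSMulStrictMono ℝ X] [PosSMulReflectLT ℝ X] [CompleteSpace X]

private noncomputable def Rop (T : X →L[ℝ] X) (lam : ℝ) : X →L[ℝ] X :=
  lam⁻¹ • ∑' n, (lam⁻¹ • T) ^ n

private lemma sum_norm_pow {T : X →L[ℝ] X} {ρ lam : ℝ} (hρ : 0 < ρ)
    (hlim : Tendsto (fun n : ℕ => ‖(T ^ n : X →L[ℝ] X)‖ ^ (1 / (n : ℝ))) atTop (nhds ρ))
    (h : ρ < lam) : Summable fun n => ‖((lam⁻¹ • T : X →L[ℝ] X)) ^ n‖ := by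
  set c := (ρ + lam) / 2 with hc_def
  have hc : ρ < c := by rw [hc_def]; linarith
  have hc' : c < lam := by rw [hc_def]; linarith
  have hc0 : (0:ℝ) < c := by rw [hc_def]; linarith
  have hlam : (0:ℝ) < lam := lt_trans hρ h
  obtain ⟨N, hN⟩ := eventually_atTop.mp (hlim.eventually_lt_const hc)
  have hbound : ∀ n, N + 1 ≤ n → ‖((lam⁻¹ • T : X →L[ℝ] X)) ^ n‖ ≤ (c / lam) ^ n := by
    intro n hn
    have hn0 : n ≠ 0 := by omega
    have h1 : ‖(T ^ n : X →L[ℝ] X)‖ < c ^ n := by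
      have heq : ‖(T ^ n : X →L[ℝ] X)‖ = (‖(T ^ n : X →L[ℝ] X)‖ ^ (1 / (n:ℝ))) ^ n := by
        rw [← Real.rpow_natCast (‖(T ^ n : X →L[ℝ] X)‖ ^ (1 / (n:ℝ))) n,
          ← Real.rpow_mul (norm_nonneg _), one_div, inv_mul_cancel₀ (by exact_mod_cast hn0),
          Real.rpow_one]
      rw [heq]
      exact pow_lt_pow_left₀ (hN n (by omega)) (Real.rpow_nonneg (norm_nonneg _) _) hn0
    have h2 : ((lam⁻¹ • T : X →L[ℝ] X)) ^ n = (lam⁻¹) ^ n • (T ^ n : X →L[ℝ] X) := smul_pow _ _ _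
    rw [h2, norm_smul (lam⁻¹ ^ n) ((T : X →L[ℝ] X) ^ n), norm_pow, norm_inv, Real.norm_eq_abs, abs_of_pos hlam, div_pow,
      inv_pow]
    rw [inv_mul_le_iff₀ (pow_pos hlam n)]
    have he : lam ^ n * (c ^ n / lam ^ n) = c ^ n := by
      field_simp
    rw [he]
    exact h1.le
  have hgeom : Summable fun n : ℕ => (c / lam) ^ n :=
    summable_geometric_of_lt_one (by positivity) (by rw [div_lt_one hlam]; exact hc')
  refine (summable_nat_add_iff (N + 1)).mp ?_
  refine Summable.of_nonneg_of_le (fun n => norm_nonneg _)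
    (fun n => hbound (n + (N + 1)) (by omega)) ?_
  exact (summable_nat_add_iff (N + 1)).mpr hgeom

private lemma Rop_facts {T : X →L[ℝ] X} (hT : ∀ x : X, 0 ≤ x → 0 ≤ T x) {ρ lam : ℝ}
    (hρ : 0 < ρ)
    (hlim : Tendsto (fun n : ℕ => ‖(T ^ n : X →L[ℝ] X)‖ ^ (1 / (n : ℝ))) atTop (nhds ρ))
    (h : ρ < lam) :
    (lam • (1 : X →L[ℝ] X) - T) * Rop T lam = 1 ∧ IsPos (Rop T lam) := by
  have hlam : (0:ℝ) < lam := lt_trans hρ h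
  set u : X →L[ℝ] X := lam⁻¹ • T with hu
  have hsn : Summable fun n => ‖u ^ n‖ := sum_norm_pow hρ hlim h
  have hsum : Summable fun n => u ^ n := hsn.of_norm
  have h0 : Tendsto (fun n => u ^ n) atTop (nhds 0) := hsum.tendsto_atTop_zero
  have hfac : lam • (1 : X →L[ℝ] X) - T = lam • ((1 : X →L[ℝ] X) - u) := by
    rw [smul_sub, hu, smul_smul, mul_inv_cancel₀ (ne_of_gt hlam), one_smul]
  constructor
  · rw [Rop, hfac, smul_mul_assoc, mul_smul_comm, smul_smul,
      mul_inv_cancel₀ (ne_of_gt hlam), one_smul, geom_left hsum h0]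
  · have hposu : IsPos u := fun x hx => by
      simpa [hu] using smul_nonneg (le_of_lt (inv_pos.mpr hlam)) (hT x hx)
    have : IsPos (∑' n, u ^ n) := IsPos.tsum hsum fun n => hposu.pow n
    exact this.smul (le_of_lt (inv_pos.mpr hlam))

end Main

section Main2

variable {X : Type*} [NormedAddCommGroup X] [Lattice X] [HasSolidNorm X]
    [IsOrderedAddMonoid X] [NormedSpace ℝ X]
    [PosSMulStrictMono ℝ X] [PosSMulReflectLT ℝ X] [CompleteSpace X]

private lemma resolvent_unbounded {T : X →L[ℝ] X} (hT : ∀ x : X, 0 ≤ x → 0 ≤ T x) {ρ : ℝ}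
    (hρ : 0 < ρ)
    (hlow : ∀ n : ℕ, ρ ^ n ≤ ‖(T ^ n : X →L[ℝ] X)‖)
    (hlim : Tendsto (fun n : ℕ => ‖(T ^ n : X →L[ℝ] X)‖ ^ (1 / (n : ℝ))) atTop (nhds ρ))
    (K η : ℝ) (hK : 0 < K) (hη : 0 < η) :
    ∃ lam : ℝ, ρ < lam ∧ lam < ρ + η ∧ K < ‖Rop T lam‖ := by
  by_contra hcon
  push_neg at hcon
  -- choose lam and mu
  set ε₀ : ℝ := min (η / 2) (min (1 / (4 * K)) (ρ / 2)) with hε₀_def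
  have hε₀ : 0 < ε₀ := by
    apply lt_min (by linarith)
    exact lt_min (by positivity) (by linarith)
  have hε₀η : ε₀ ≤ η / 2 := min_le_left _ _
  have hε₀K : ε₀ ≤ 1 / (4 * K) := le_trans (min_le_right _ _) (min_le_left _ _)
  have hε₀ρ : ε₀ ≤ ρ / 2 := le_trans (min_le_right _ _) (min_le_right _ _)
  set lam : ℝ := ρ + ε₀ with hlam_def
  set μ : ℝ := ρ - ε₀ with hμ_def
  have hlamρ : ρ < lam := by rw [hlam_def]; linarith
  have hμ0 : 0 < μ := by rw [hμ_def]; linarith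
  have hμρ : μ < ρ := by rw [hμ_def]; linarith
  have hRK : ‖Rop T lam‖ ≤ K := hcon lam hlamρ (by rw [hlam_def]; linarith)
  obtain ⟨hRinv, hRpos⟩ := Rop_facts hT hρ hlim hlamρ
  -- the perturbation v
  set v : X →L[ℝ] X := (2 * ε₀) • Rop T lam with hv_def
  have hvpos : IsPos v := hRpos.smul (by positivity)
  have hvnorm : ‖v‖ ≤ 1 / 2 := by
    rw [hv_def, norm_smul (2 * ε₀) (Rop T lam), Real.norm_eq_abs, abs_of_pos (by positivity)]
    calc 2 * ε₀ * ‖Rop T lam‖ ≤ 2 * (1 / (4 * K)) * K := by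
          apply mul_le_mul (by nlinarith) hRK (norm_nonneg _) (by positivity)
      _ ≤ 1 / 2 := by
          rw [show 2 * (1 / (4 * K)) * K = 2 * K / (4 * K) by ring]
          rw [div_le_div_iff₀ (by positivity) (by norm_num)]
          nlinarith
  have hvnorm' : ∀ k : ℕ, ‖v ^ k‖ ≤ (1 / 2 : ℝ) ^ k := by
    intro k
    have h1 : (1:ℝ) ≤ ‖(1 : X →L[ℝ] X)‖ := by simpa using hlow 0
    rcases Nat.eq_zero_or_pos k with rfl | hk
    · simp only [pow_zero]
      -- ‖1‖ = 1 needs nontrivial; instead ‖1‖ ≤ 1 : use opNorm_le_bound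
      refine ContinuousLinearMap.opNorm_le_bound _ (by norm_num) fun x => by simp
    · calc ‖v ^ k‖ ≤ ‖v‖ ^ k := norm_pow_le' v hk
        _ ≤ (1 / 2 : ℝ) ^ k := pow_le_pow_left₀ (norm_nonneg _) hvnorm k
  have hsvn : Summable fun k => ‖v ^ k‖ :=
    Summable.of_nonneg_of_le (fun k => norm_nonneg _) hvnorm'
      (summable_geometric_of_lt_one (by norm_num) (by norm_num))
  have hsv : Summable fun k => v ^ k := hsvn.of_norm
  have hsv0 : Tendsto (fun k => v ^ k) atTop (nhds 0) := hsv.tendsto_atTop_zero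
  set Sv : X →L[ℝ] X := ∑' k, v ^ k with hSv_def
  have hSvpos : IsPos Sv := IsPos.tsum hsv fun k => hvpos.pow k
  set B : X →L[ℝ] X := Rop T lam * Sv with hB_def
  have hBpos : IsPos B := hRpos.mul hSvpos
  -- left inverse identity at μ
  have hμB : (μ • (1 : X →L[ℝ] X) - T) * B = 1 := by
    have hsplit : μ • (1 : X →L[ℝ] X) - T
        = (lam • (1 : X →L[ℝ] X) - T) - (2 * ε₀) • (1 : X →L[ℝ] X) := by
      rw [hμ_def, hlam_def]
      module
    rw [hB_def, hsplit, sub_mul, ← mul_assoc, hRinv, one_mul, smul_mul_assoc, one_mul,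
      ← smul_mul_assoc, ← hv_def]
    rw [show Sv - v * Sv = (1 - v) * Sv by rw [sub_mul, one_mul], hSv_def]
    exact geom_left hsv hsv0
  -- pointwise: μ • B x = x + T (B x)
  have hpt : ∀ x : X, μ • B x = x + T (B x) := by
    intro x
    have := congrArg (fun (S : X →L[ℝ] X) => S x) hμB
    simp only [ContinuousLinearMap.mul_apply, ContinuousLinearMap.sub_apply,
      ContinuousLinearMap.smul_apply, ContinuousLinearMap.one_apply] at this
    have h2 : μ • B x - T (B x) = x := this
    linear_combination (norm := abel) h2
  -- induction: T^n x ≤ μ^{n+1} • B x for x ≥ 0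
  have hind : ∀ n : ℕ, ∀ x : X, 0 ≤ x → (T ^ n) x ≤ μ ^ (n + 1) • B x := by
    intro n
    induction n with
    | zero =>
      intro x hx
      have h1 : x ≤ μ • B x := by
        rw [hpt x]
        have : 0 ≤ T (B x) := hT _ (hBpos x hx)
        simpa using this
      simpa using h1
    | succ n ih =>
      intro x hx
      have h1 : (T ^ (n + 1)) x = T ((T ^ n) x) := by
        rw [pow_succ']
        simp [ContinuousLinearMap.mul_apply]
      rw [h1]
      calc T ((T ^ n) x) ≤ T (μ ^ (n + 1) • B x) := by
            refine (show IsPos T from hT).mono (ih x hx)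
        _ = μ ^ (n + 1) • T (B x) := by rw [map_smul]
        _ ≤ μ ^ (n + 2) • B x := by
            have h2 : T (B x) = μ • B x - x := by rw [hpt x]; abel
            rw [h2, smul_sub, smul_smul]
            have h3 : 0 ≤ μ ^ (n + 1) • x := smul_nonneg (by positivity) hx
            have h4 : μ ^ (n + 1) * μ = μ ^ (n + 2) := by ring
            rw [h4]
            exact sub_le_self _ h3
  -- operator norm bound
  have hTn : ∀ n : ℕ, ‖(T ^ n : X →L[ℝ] X)‖ ≤ μ ^ (n + 1) * ‖B‖ := by
    intro n
    have hTpos : IsPos (T ^ n : X →L[ℝ] X) := (show IsPos T from hT).pow n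
    refine opNorm_le_of_pos hTpos (by positivity) fun x hx => ?_
    have h1 : ‖(T ^ n) x‖ ≤ ‖μ ^ (n + 1) • B x‖ := by
      apply norm_le_norm_of_abs_le_abs
      rw [abs_of_nonneg (hTpos x hx), abs_of_nonneg (smul_nonneg (by positivity) (hBpos x hx))]
      exact hind n x hx
    calc ‖(T ^ n) x‖ ≤ ‖μ ^ (n + 1) • B x‖ := h1
      _ = μ ^ (n + 1) * ‖B x‖ := by
          rw [norm_smul, Real.norm_eq_abs, abs_of_pos (by positivity)]
      _ ≤ μ ^ (n + 1) * (‖B‖ * ‖x‖) := by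
          exact mul_le_mul_of_nonneg_left (B.le_opNorm x) (by positivity)
      _ = μ ^ (n + 1) * ‖B‖ * ‖x‖ := by ring
  -- contradiction
  have hρμ : 1 < ρ / μ := (one_lt_div hμ0).mpr hμρ
  obtain ⟨n, hn⟩ := ((tendsto_pow_atTop_atTop_of_one_lt hρμ).eventually_gt_atTop
    (μ * ‖B‖)).exists
  have h1 : ρ ^ n ≤ μ ^ (n + 1) * ‖B‖ := le_trans (hlow n) (hTn n)
  have h2 : (ρ / μ) ^ n ≤ μ * ‖B‖ := by
    rw [div_pow, div_le_iff₀ (by positivity)]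
    calc ρ ^ n ≤ μ ^ (n + 1) * ‖B‖ := h1
      _ = μ * ‖B‖ * μ ^ n := by ring
  linarith

end Main2

section Main3

variable {X : Type*} [NormedAddCommGroup X] [Lattice X] [HasSolidNorm X]
    [IsOrderedAddMonoid X] [NormedSpace ℝ X]
    [PosSMulStrictMono ℝ X] [PosSMulReflectLT ℝ X] [CompleteSpace X]

private lemma key {T : X →L[ℝ] X} (hT : ∀ x : X, 0 ≤ x → 0 ≤ T x) {ρ : ℝ}
    (hρ : 0 < ρ)
    (hlow : ∀ n : ℕ, ρ ^ n ≤ ‖(T ^ n : X →L[ℝ] X)‖)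
    (hlim : Tendsto (fun n : ℕ => ‖(T ^ n : X →L[ℝ] X)‖ ^ (1 / (n : ℝ))) atTop (nhds ρ))
    {ε : ℝ} (hε : 0 < ε) :
    ∃ x : X, ‖x‖ = 1 ∧ ‖T x - ρ • x‖ ≤ ε := by
  obtain ⟨lam, hlam1, hlam2, hlam3⟩ :=
    resolvent_unbounded hT hρ hlow hlim (2 / ε) (ε / 2) (by positivity) (by positivity)
  obtain ⟨hRinv, -⟩ := Rop_facts hT hρ hlim hlam1
  obtain ⟨y, hy1, hy2⟩ := (Rop T lam).exists_lt_apply_of_lt_opNorm hlam3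
  set z : X := Rop T lam y with hz_def
  have hz : 2 / ε < ‖z‖ := hy2
  have hz0 : (0:ℝ) < ‖z‖ := lt_trans (by positivity) hz
  have hzne : z ≠ 0 := by
    intro h
    rw [h, norm_zero] at hz0
    exact lt_irrefl _ hz0
  refine ⟨‖z‖⁻¹ • z, ?_, ?_⟩
  · rw [norm_smul, Real.norm_eq_abs, abs_of_pos (by positivity), inv_mul_cancel₀ (ne_of_gt hz0)]
  · have hTz : T z = lam • z - y := by
      have := congrArg (fun (S : X →L[ℝ] X) => S y) hRinv
      simp only [ContinuousLinearMap.mul_apply, ContinuousLinearMap.sub_apply,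
        ContinuousLinearMap.smul_apply, ContinuousLinearMap.one_apply] at this
      rw [← hz_def] at this
      have h2 : lam • z - T z = y := this
      linear_combination (norm := abel) -h2
    have hcomp : T (‖z‖⁻¹ • z) - ρ • (‖z‖⁻¹ • z) = ‖z‖⁻¹ • ((lam - ρ) • z - y) := by
      rw [map_smul, hTz]
      module
    rw [hcomp, norm_smul, Real.norm_eq_abs, abs_of_pos (by positivity)]
    have hb : ‖(lam - ρ) • z - y‖ ≤ (lam - ρ) * ‖z‖ + 1 := by
      calc ‖(lam - ρ) • z - y‖ ≤ ‖(lam - ρ) • z‖ + ‖y‖ := norm_sub_le _ _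
        _ ≤ (lam - ρ) * ‖z‖ + 1 := by
            rw [norm_smul, Real.norm_eq_abs, abs_of_pos (by linarith)]
            have : ‖y‖ ≤ 1 := le_of_lt hy1
            linarith
    calc ‖z‖⁻¹ * ‖(lam - ρ) • z - y‖ ≤ ‖z‖⁻¹ * ((lam - ρ) * ‖z‖ + 1) := by
          exact mul_le_mul_of_nonneg_left hb (by positivity)
      _ = (lam - ρ) + ‖z‖⁻¹ := by field_simp
      _ ≤ ε / 2 + ε / 2 := by
          have h1 : lam - ρ ≤ ε / 2 := by linarith
          have h2 : ‖z‖⁻¹ ≤ ε / 2 := by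
            rw [inv_le_comm₀ hz0 (by positivity)]
            have : (ε / 2)⁻¹ = 2 / ε := by field_simp
            rw [this]
            exact hz.le
          linarith
      _ = ε := by ring
end Main3

theorem stmt6 {X : Type*} [NormedAddCommGroup X] [Lattice X] [HasSolidNorm X]
    [IsOrderedAddMonoid X] [NormedSpace ℝ X]
    [PosSMulStrictMono ℝ X] [PosSMulReflectLT ℝ X] [CompleteSpace X]
    (T : X →L[ℝ] X) (hT : ∀ x : X, 0 ≤ x → 0 ≤ T x)
    (ρ : ℝ) (hρ : 0 < ρ)
    (hlow : ∀ n : ℕ, ρ ^ n ≤ ‖(T ^ n : X →L[ℝ] X)‖)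
    (hlim : Tendsto (fun n : ℕ => ‖(T ^ n : X →L[ℝ] X)‖ ^ (1 / (n : ℝ))) atTop (nhds ρ)) :
    ∃ x : ℕ → X, (∀ j, ‖x j‖ = 1) ∧
      Tendsto (fun j => ‖T (x j) - ρ • x j‖) atTop (nhds 0) := by
  have hkey : ∀ j : ℕ, ∃ x : X, ‖x‖ = 1 ∧ ‖T x - ρ • x‖ ≤ 1 / (j + 1 : ℝ) := fun j =>
    key hT hρ hlow hlim (by positivity)
  choose x hx1 hx2 using hkey
  refine ⟨x, hx1, ?_⟩
  have h0 : Tendsto (fun j : ℕ => 1 / (j + 1 : ℝ)) atTop (nhds 0) :=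
    tendsto_one_div_add_atTop_nhds_zero_nat
  exact squeeze_zero (fun j => norm_nonneg _) hx2 h0
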